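/- For every positive integer n, ∑_{λ∈A_n} q^{|λ|} = (−q;q)_n/(q²;q)_n as formal power series in q; equivalently, for every nonnegative integer N, the number of λ ∈ A_n with |λ| = N equals the coefficient of q^N in ∏_{i=1}^{n} (1 + q^i)/(1 − q^{i+1}). -/

import Mathlib

namespace ALH

open Finset PowerSeries

attribute [local instance] Classical.propDecidable

/-- The anti-lecture-hall condition on a tuple, ℕ version. -/
def CondN (k : ℕ) (l : Fin k → ℕ) : Prop :=
  ∀ i : ℕ, ∀ h : i + 1 < k, (i + 1) * l ⟨i + 1, h⟩ ≤ (i + 2) * l ⟨i, by omega⟩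

/-- ALH compositions with m+1 parts, weight w, last part ≥ r. -/
noncomputable def S (m w r : ℕ) : Finset (Fin (m + 1) → ℕ) :=
  (Fintype.piFinset fun _ : Fin (m + 1) => Finset.range (w + 1)).filter
    (fun l => CondN (m + 1) l ∧ (∑ i, l i) = w ∧ r ≤ l (Fin.last m))

noncomputable def a (m w r : ℕ) : ℕ := (S m w r).card

lemma le_sum {k : ℕ} (l : Fin k → ℕ) (i : Fin k) : l i ≤ ∑ j, l j :=
  Finset.single_le_sum (fun _ _ => Nat.zero_le _) (mem_univ i)

lemma mem_S {m w r : ℕ} {l : Fin (m + 1) → ℕ} :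
    l ∈ S m w r ↔ CondN (m + 1) l ∧ (∑ i, l i) = w ∧ r ≤ l (Fin.last m) := by
  constructor
  · exact fun h => (mem_filter.1 h).2
  · intro h
    refine mem_filter.2 ⟨Fintype.mem_piFinset.2 fun i => mem_range.2 ?_, h⟩
    have := le_sum l i
    omega

lemma a0 (w r : ℕ) : a 0 w r = if r ≤ w then 1 else 0 := by
  split_ifs with h
  · rw [a, Finset.card_eq_one]
    refine ⟨fun _ => w, ?_⟩
    ext l
    simp only [mem_S, Finset.mem_singleton]
    constructor
    · rintro ⟨-, hs, -⟩
      funext i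
      have : i = 0 := Fin.ext (by omega)
      subst this
      simpa using hs
    · rintro rfl
      refine ⟨fun i hi => by omega, by simp, by simpa using h⟩
  · rw [a, Finset.card_eq_zero]
    ext l
    simp only [mem_S, Finset.notMem_empty, iff_false, not_and]
    intro _ hs hr
    have : l (Fin.last 0) ≤ ∑ i, l i := le_sum l _
    omega

/-- chain comparison: (i+1) * l (i+d) ≤ (i+d+1) * l i. -/
lemma chain {k : ℕ} {l : Fin k → ℕ} (hc : CondN k l) :
    ∀ d i : ℕ, ∀ h : i + d < k, (i + 1) * l ⟨i + d, h⟩ ≤ (i + d + 1) * l ⟨i, by omega⟩ := by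
  intro d
  induction d with
  | zero => intro i h; simp
  | succ d ih =>
    intro i h
    have h1 := hc (i + d) (by omega)
    have h2 := ih i (by omega)
    have key : (i + d + 1) * ((i + 1) * l ⟨i + d + 1, by omega⟩)
        ≤ (i + d + 1) * ((i + d + 2) * l ⟨i, by omega⟩) := by
      calc (i + d + 1) * ((i + 1) * l ⟨i + d + 1, by omega⟩)
          = (i + 1) * ((i + d + 1) * l ⟨i + d + 1, by omega⟩) := by ring
        _ ≤ (i + 1) * ((i + d + 2) * l ⟨i + d, by omega⟩) := by
            exact Nat.mul_le_mul_left _ h1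
        _ = (i + d + 2) * ((i + 1) * l ⟨i + d, by omega⟩) := by ring
        _ ≤ (i + d + 2) * ((i + d + 1) * l ⟨i, by omega⟩) := by
            exact Nat.mul_le_mul_left _ h2
        _ = (i + d + 1) * ((i + d + 2) * l ⟨i, by omega⟩) := by ring
    exact Nat.le_of_mul_le_mul_left key (by omega)

lemma aux1 {k r t : ℕ} (hr : r ≤ k + 1) (h : (k + 1) * r ≤ (k + 2) * t) : r ≤ t := by
  by_contra hcon
  have ht : t + 1 ≤ r := by omega
  nlinarith

lemma init_mk {k : ℕ} (q : Fin (k + 1) → ℕ) (j : ℕ) (h : j < k) :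
    Fin.init q ⟨j, h⟩ = q ⟨j, by omega⟩ := rfl

lemma snoc_mk_lt {k : ℕ} (p : Fin k → ℕ) (x : ℕ) (j : ℕ) (h : j < k) (h2 : j < k + 1) :
    (Fin.snoc p x : Fin (k + 1) → ℕ) ⟨j, h2⟩ = p ⟨j, h⟩ := by
  have : (⟨j, h2⟩ : Fin (k + 1)) = Fin.castSucc ⟨j, h⟩ := rfl
  rw [this, Fin.snoc_castSucc]

lemma snoc_mk_last {k : ℕ} (p : Fin k → ℕ) (x : ℕ) (h2 : k < k + 1) :
    (Fin.snoc p x : Fin (k + 1) → ℕ) ⟨k, h2⟩ = x := by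
  have : (⟨k, h2⟩ : Fin (k + 1)) = Fin.last k := rfl
  rw [this, Fin.snoc_last]

lemma sum_split {k : ℕ} (l : Fin (k + 1) → ℕ) :
    (∑ i, l i) = (∑ i, Fin.init l i) + l (Fin.last k) := by
  rw [Fin.sum_univ_castSucc]
  rfl

/-- Bucket lemma: compositions with m+2 parts, last part exactly r. -/
lemma bucket (m w r : ℕ) (hr : r ≤ m + 1) :
    ((S (m + 1) w r).filter (fun l => l (Fin.last (m + 1)) = r)).card
      = if r ≤ w then a m (w - r) r else 0 := by
  split_ifs with hw
  · rw [a]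
    refine Finset.card_bij' (fun l _ => Fin.init l) (fun p _ => Fin.snoc p r) ?_ ?_ ?_ ?_
    · -- init maps into S m (w-r) r
      intro l hl
      rw [mem_filter] at hl
      obtain ⟨hl, hlast⟩ := hl
      rw [mem_S] at hl
      obtain ⟨hc, hs, -⟩ := hl
      show Fin.init l ∈ S m (w - r) r
      have hsum : (∑ i, Fin.init l i) = w - r := by
        have := sum_split l
        rw [hlast] at this
        omega
      rw [mem_S]
      refine ⟨?_, hsum, ?_⟩
      · intro i h
        have := hc i (by omega)
        rw [init_mk, init_mk]
        convert this using 2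
      · have hcond := hc m (by omega)
        have hm1 : l ⟨m + 1, by omega⟩ = r := by
          have he : Fin.last (m + 1) = ⟨m + 1, by omega⟩ := rfl
          rw [he] at hlast; exact hlast
        rw [hm1] at hcond
        have he2 : Fin.init l (Fin.last m) = l ⟨m, by omega⟩ := rfl
        rw [he2]
        exact aux1 hr (by linarith [hcond])
    · -- snoc maps back
      intro p hp
      rw [mem_S] at hp
      obtain ⟨hc, hs, hlast⟩ := hp
      show (Fin.snoc p r : Fin (m + 2) → ℕ) ∈ filter _ _
      rw [mem_filter]
      have hsum : (∑ i, (Fin.snoc p r : Fin (m + 2) → ℕ) i) = w := by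
        rw [sum_split]
        have h1 : Fin.init (Fin.snoc p r : Fin (m + 2) → ℕ) = p := by
          simp
        rw [h1, Fin.snoc_last, hs]
        omega
      have hlast2 : (Fin.snoc p r : Fin (m + 2) → ℕ) (Fin.last (m + 1)) = r := by
        simp
      refine ⟨mem_S.2 ⟨?_, hsum, by rw [hlast2]⟩, hlast2⟩
      intro i h
      rcases Nat.lt_or_ge (i + 1) (m + 1) with hlt | hge
      · rw [snoc_mk_lt p r (i + 1) hlt, snoc_mk_lt p r i (by omega)]
        exact hc i hlt
      · have him : i = m := by omega
        subst him
        rw [snoc_mk_lt p r i (by omega)]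
        have he : (⟨i + 1, h⟩ : Fin (i + 2)) = ⟨i + 1, by omega⟩ := rfl
        rw [he, snoc_mk_last p r]
        calc (i + 1) * r ≤ (i + 1) * p ⟨i, by omega⟩ := by
              have hrp : r ≤ p ⟨i, by omega⟩ := by
                have he2 : Fin.last i = ⟨i, by omega⟩ := rfl
                rw [he2] at hlast; exact hlast
              exact Nat.mul_le_mul_left _ hrp
          _ ≤ (i + 2) * p ⟨i, by omega⟩ := Nat.mul_le_mul_right _ (by omega)
    · intro l hl
      rw [mem_filter] at hl
      show (Fin.snoc (Fin.init l) r : Fin (m + 2) → ℕ) = l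
      rw [← hl.2]
      exact Fin.snoc_init_self l
    · intro p _
      show Fin.init (Fin.snoc p r : Fin (m + 2) → ℕ) = p
      simp
  · rw [Finset.card_eq_zero]
    ext l
    simp only [mem_filter, Finset.notMem_empty, iff_false, not_and]
    intro hl hlast
    rw [mem_S] at hl
    have := le_sum l (Fin.last (m + 1))
    omega

/-- Splitting off the bucket with last part = r. -/
lemma split (m w r : ℕ) :
    a (m + 1) w r = ((S (m + 1) w r).filter (fun l => l (Fin.last (m + 1)) = r)).card
      + a (m + 1) w (r + 1) := by
  have hset : S (m + 1) w (r + 1)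
      = (S (m + 1) w r).filter (fun l => ¬ l (Fin.last (m + 1)) = r) := by
    ext l
    simp only [mem_filter, mem_S]
    constructor
    · rintro ⟨hc, hs, hlast⟩
      exact ⟨⟨hc, hs, by omega⟩, by omega⟩
    · rintro ⟨⟨hc, hs, hlast⟩, hne⟩
      exact ⟨hc, hs, by omega⟩
  rw [a, a, hset]
  exact (Finset.card_filter_add_card_filter_not _).symm

def T (p : ℕ) : ℕ := ∑ i ∈ range p, (i + 1)

lemma T_succ (p : ℕ) : T (p + 1) = T p + (p + 1) := Finset.sum_range_succ _ _

lemma T_pos (p : ℕ) : 0 < T (p + 1) := by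
  rw [T_succ]; omega

lemma sum_staircase (m : ℕ) : (∑ i : Fin (m + 1), (i.1 + 1)) = T (m + 1) := by
  rw [T, Fin.sum_univ_eq_sum_range (fun i => i + 1) (m + 1)]

/-- Staircase lemma: last part ≥ m+1 means we can subtract (1,2,…,m+1). -/
lemma staircase (m w : ℕ) :
    a m w (m + 1) = if T (m + 1) ≤ w then a m (w - T (m + 1)) 0 else 0 := by
  have hposcase : ∀ l ∈ S m w (m + 1), ∀ i : Fin (m + 1), i.1 + 1 ≤ l i := by
    intro l hl i
    rw [mem_S] at hl
    obtain ⟨hc, hs, hlast⟩ := hl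
    have hch := chain hc (m - i.1) i.1 (by omega)
    have hlast' : m + 1 ≤ l ⟨m, by omega⟩ := by
      have he : Fin.last m = ⟨m, by omega⟩ := rfl
      rw [he] at hlast
      exact hlast
    have he2 : l ⟨i.1 + (m - i.1), by omega⟩ = l ⟨m, by omega⟩ := by
      congr 1
      exact Fin.ext (show i.1 + (m - i.1) = m by omega)
    rw [he2] at hch
    -- (i+1) * l⟨m⟩ ≤ (m+1) * l i   and l⟨m⟩ ≥ m+1
    have h3 : (i.1 + 1) * (m + 1) ≤ (i.1 + (m - i.1) + 1) * l ⟨i.1, by omega⟩ :=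
      le_trans (Nat.mul_le_mul_left _ hlast') hch
    have he3 : (⟨i.1, by omega⟩ : Fin (m + 1)) = i := Fin.ext rfl
    rw [he3] at h3
    have h4 : i.1 + (m - i.1) + 1 = m + 1 := by omega
    rw [h4] at h3
    have := Nat.le_of_mul_le_mul_left (by
      calc (m + 1) * (i.1 + 1) = (i.1 + 1) * (m + 1) := by ring
        _ ≤ (m + 1) * l i := h3) (show 0 < m + 1 by omega)
    exact this
  split_ifs with hT
  · rw [a, a]
    refine Finset.card_bij' (fun l _ => fun i => l i - (i.1 + 1))
      (fun p _ => fun i => p i + (i.1 + 1)) ?_ ?_ ?_ ?_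
    · intro l hl
      have hpos := hposcase l hl
      rw [mem_S] at hl
      obtain ⟨hc, hs, hlast⟩ := hl
      have hsum : (∑ i : Fin (m + 1), (l i - (i.1 + 1))) = w - T (m + 1) := by
        have h1 : (∑ i : Fin (m + 1), (l i - (i.1 + 1))) + (∑ i : Fin (m + 1), (i.1 + 1))
            = ∑ i : Fin (m + 1), l i := by
          rw [← Finset.sum_add_distrib]
          exact Finset.sum_congr rfl (fun i _ => by have := hpos i; omega)
        rw [sum_staircase] at h1
        omega
      show (fun i => l i - (i.1 + 1)) ∈ S m (w - T (m + 1)) 0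
      rw [mem_S]
      refine ⟨?_, hsum, Nat.zero_le _⟩
      intro i h
      have hcnd := hc i h
      have p1 : i + 1 + 1 ≤ l ⟨i + 1, h⟩ := hpos ⟨i + 1, h⟩
      have p2 : i + 1 ≤ l ⟨i, by omega⟩ := hpos ⟨i, by omega⟩
      show (i + 1) * (l ⟨i + 1, h⟩ - (i + 1 + 1)) ≤ (i + 2) * (l ⟨i, by omega⟩ - (i + 1))
      zify [p1, p2]
      push_cast at hcnd
      nlinarith [hcnd]
    · intro p hp
      rw [mem_S] at hp
      obtain ⟨hc, hs, -⟩ := hp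
      show (fun i => p i + (i.1 + 1)) ∈ S m w (m + 1)
      rw [mem_S]
      refine ⟨?_, ?_, ?_⟩
      · intro i h
        have hcnd := hc i h
        show (i + 1) * (p ⟨i + 1, h⟩ + (i + 1 + 1)) ≤ (i + 2) * (p ⟨i, by omega⟩ + (i + 1))
        nlinarith [hcnd]
      · rw [Finset.sum_add_distrib, sum_staircase, hs]
        omega
      · show m + 1 ≤ p (Fin.last m) + ((Fin.last m).1 + 1)
        have : (Fin.last m).1 = m := rfl
        omega
    · intro l hl
      have hpos := hposcase l hl
      funext i
      show l i - (i.1 + 1) + (i.1 + 1) = l i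
      have := hpos i
      omega
    · intro p _
      funext i
      show p i + (i.1 + 1) - (i.1 + 1) = p i
      omega
  · rw [a, Finset.card_eq_zero]
    ext l
    simp only [Finset.notMem_empty, iff_false]
    intro hl
    have hpos := hposcase l hl
    rw [mem_S] at hl
    have hge : T (m + 1) ≤ ∑ i, l i := by
      rw [← sum_staircase]
      exact Finset.sum_le_sum (fun i _ => hpos i)
    omega

noncomputable def Fs (m r : ℕ) : PowerSeries ℚ := PowerSeries.mk fun w => (a m w r : ℚ)

lemma coeff_Fs (m r w : ℕ) : (PowerSeries.coeff (R := ℚ) w) (Fs m r) = (a m w r : ℚ) :=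
  PowerSeries.coeff_mk _ _

/-- Series form of bucket+split. -/
lemma series_rec (m r : ℕ) (hr : r ≤ m + 1) :
    Fs (m + 1) r = X ^ r * Fs m r + Fs (m + 1) (r + 1) := by
  ext w
  simp only [map_add, coeff_Fs, PowerSeries.coeff_X_pow_mul']
  rw [split m w r, bucket m w r hr]
  push_cast [apply_ite (Nat.cast : ℕ → ℚ)]
  ring

/-- Series form of the staircase lemma. -/
lemma series_stair (m : ℕ) :
    Fs m (m + 1) = X ^ (T (m + 1)) * Fs m 0 := by
  ext w
  simp only [coeff_Fs, PowerSeries.coeff_X_pow_mul']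
  rw [staircase m w]
  push_cast [apply_ite (Nat.cast : ℕ → ℚ)]
  ring

/-- Summed recursion. -/
lemma sumform (m : ℕ) : ∀ k r : ℕ, r ≤ m + 2 → m + 2 - r = k →
    Fs (m + 1) r = (∑ j ∈ Icc r (m + 1), X ^ j * Fs m j) + X ^ (T (m + 2)) * Fs (m + 1) 0 := by
  intro k
  induction k with
  | zero =>
    intro r hr hk
    have : r = m + 2 := by omega
    subst this
    rw [show Icc (m + 2) (m + 1) = ∅ from Icc_eq_empty (by omega), Finset.sum_empty, zero_add]
    exact series_stair (m + 1)
  | succ k ih =>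
    intro r hr hk
    have hr' : r ≤ m + 1 := by omega
    rw [series_rec m r hr', ih (r + 1) (by omega) (by omega)]
    have hins : Icc r (m + 1) = insert r (Icc (r + 1) (m + 1)) := by
      ext x
      simp only [mem_Icc, mem_insert]
      omega
    rw [hins, Finset.sum_insert (by simp [mem_Icc])]
    ring

noncomputable def Pp (k : ℕ) : PowerSeries ℚ := ∏ i ∈ range k, (1 + X ^ (i + 1))
noncomputable def Dd (k : ℕ) : PowerSeries ℚ := ∏ i ∈ range k, (1 - X ^ (i + 2))

lemma Pp_succ (k : ℕ) : Pp (k + 1) = Pp k * (1 + X ^ (k + 1)) := Finset.prod_range_succ _ _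
lemma Dd_succ (k : ℕ) : Dd (k + 1) = Dd k * (1 - X ^ (k + 2)) := Finset.prod_range_succ _ _

def ee (n r : ℕ) : ℕ := ∑ j ∈ range r, (n - j)

lemma ee_zero (n : ℕ) : ee n 0 = 0 := Finset.sum_range_zero _
lemma ee_succ (n r : ℕ) : ee n (r + 1) = ee n r + (n - r) := Finset.sum_range_succ _ _

lemma ee_step (m j : ℕ) (hj : j ≤ m + 1) : ee (m + 2) j = j + ee (m + 1) j := by
  rw [ee, ee]
  have : ∀ i ∈ range j, m + 2 - i = (m + 1 - i) + 1 := by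
    intro i hi
    rw [mem_range] at hi
    omega
  rw [Finset.sum_congr rfl this, Finset.sum_add_distrib]
  simp [add_comm]

lemma ee_top (m : ℕ) : ee (m + 2) (m + 2) = T (m + 2) := by
  rw [ee, T]
  rw [← Finset.sum_range_reflect (fun j => j + 1) (m + 2)]
  refine Finset.sum_congr rfl ?_
  intro i hi
  rw [mem_range] at hi
  omega

noncomputable def Vv (m j : ℕ) : PowerSeries ℚ := X ^ (ee (m + 2) j) * Pp j * Pp (m + 2 - j)

lemma tele_term (m j : ℕ) (hj : j ≤ m + 1) :
    (1 - X ^ (m + 3)) * (X ^ j * (X ^ (ee (m + 1) j) * Pp j * Pp (m + 1 - j)))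
      = Vv m j - Vv m (j + 1) := by
  have h1 : (X : PowerSeries ℚ) ^ j * X ^ (ee (m + 1) j) = X ^ (ee (m + 2) j) := by
    rw [← pow_add, ee_step m j hj]
  have h2 : m + 2 - j = (m + 1 - j) + 1 := by omega
  have h3 : ee (m + 2) (j + 1) = ee (m + 2) j + ((m + 1 - j) + 1) := by
    rw [ee_succ]
    omega
  have h4 : m + 2 - (j + 1) = m + 1 - j := by omega
  have h5 : m + 3 = ((m + 1 - j) + 1) + (j + 1) := by omega
  rw [Vv, Vv, h4, h3, ee_step m j hj, h2, Pp_succ (m + 1 - j), Pp_succ j, h5]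
  simp only [pow_add]
  ring

lemma tele_sum (g : ℕ → PowerSeries ℚ) :
    ∀ d r : ℕ, ∑ j ∈ Icc r (r + d), (g j - g (j + 1)) = g r - g (r + d + 1) := by
  intro d
  induction d with
  | zero => intro r; simp
  | succ d ih =>
    intro r
    have hins : Icc r (r + (d + 1)) = insert (r + d + 1) (Icc r (r + d)) := by
      ext x
      simp only [mem_Icc, mem_insert]
      omega
    rw [hins, Finset.sum_insert (by simp only [mem_Icc]; omega), ih r]
    have h6 : r + (d + 1) + 1 = r + d + 1 + 1 := by omega
    rw [h6]
    ring

lemma Pp_zero : Pp 0 = 1 := Finset.prod_range_zero _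
lemma Dd_zero : Dd 0 = 1 := Finset.prod_range_zero _

lemma cc_one_sub_Xpow (t : ℕ) (ht : 0 < t) :
    PowerSeries.constantCoeff (R := ℚ) (1 - X ^ t) = 1 := by
  rw [map_sub, map_one, map_pow, PowerSeries.constantCoeff_X, zero_pow ht.ne', sub_zero]

lemma one_sub_Xpow_ne_zero (t : ℕ) (ht : 0 < t) : (1 - X ^ t : PowerSeries ℚ) ≠ 0 := by
  intro h
  have := cc_one_sub_Xpow t ht
  rw [h, map_zero] at this
  norm_num at this

/-- The main lemma: `(q²;q)_{m+1} ⋅ F_{m,r} = q^{e} (-q;q)_r (-q;q)_{m+1-r}`. -/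
lemma main (m : ℕ) : ∀ r : ℕ, r ≤ m + 1 →
    Dd (m + 1) * Fs m r = X ^ (ee (m + 1) r) * Pp r * Pp (m + 1 - r) := by
  induction m with
  | zero =>
    have geom : (1 - X : PowerSeries ℚ) * Fs 0 0 = 1 := by
      have hrw : (1 - X : PowerSeries ℚ) * Fs 0 0 = Fs 0 0 - X ^ 1 * Fs 0 0 := by ring
      rw [hrw]
      ext w
      rw [map_sub, coeff_Fs, PowerSeries.coeff_X_pow_mul', PowerSeries.coeff_one]
      rcases Nat.eq_zero_or_pos w with hw | hw
      · subst hw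
        simp [a0]
      · rw [if_pos (show 1 ≤ w by omega), coeff_Fs,
          if_neg (show ¬(w = 0) by omega), a0, a0,
          if_pos (show (0:ℕ) ≤ w by omega), if_pos (show (0:ℕ) ≤ w - 1 by omega)]
        norm_num
    have hD : Dd 1 = 1 - X ^ 2 := by
      rw [Dd, Finset.prod_range_one]
    have hP1 : Pp 1 = 1 + X := by
      rw [Pp, Finset.prod_range_one, pow_one]
    intro r hr
    interval_cases r
    · rw [hD, hP1, ee_zero, pow_zero, one_mul, Pp_zero, one_mul]
      calc (1 - X ^ 2 : PowerSeries ℚ) * Fs 0 0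
          = (1 + X) * ((1 - X) * Fs 0 0) := by ring
        _ = 1 + X := by rw [geom, mul_one]
    · have hT1 : T 1 = 1 := by rw [T, Finset.sum_range_one]
      have he11 : ee 1 1 = 1 := by rw [ee_succ, ee_zero]
      have hst := series_stair 0
      rw [hT1, pow_one] at hst
      rw [hD, hst, he11, pow_one, hP1, Nat.sub_self, Pp_zero, mul_one]
      calc (1 - X ^ 2 : PowerSeries ℚ) * (X * Fs 0 0)
          = X * ((1 + X) * ((1 - X) * Fs 0 0)) := by ring
        _ = X * (1 + X) := by rw [geom, mul_one]
  | succ m ih =>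
    have hsummand : ∀ j ∈ Icc 0 (m + 1),
        Dd (m + 2) * (X ^ j * Fs m j) = Vv m j - Vv m (j + 1) := by
      intro j hj
      have hj' : j ≤ m + 1 := (mem_Icc.1 hj).2
      calc Dd (m + 2) * (X ^ j * Fs m j)
          = (1 - X ^ (m + 3)) * (X ^ j * (Dd (m + 1) * Fs m j)) := by
            rw [Dd_succ (m + 1)]; ring
        _ = (1 - X ^ (m + 3)) * (X ^ j * (X ^ (ee (m + 1) j) * Pp j * Pp (m + 1 - j))) := by
            rw [ih j hj']
        _ = Vv m j - Vv m (j + 1) := tele_term m j hj'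
    have hV0 : Vv m 0 = Pp (m + 2) := by
      rw [Vv, ee_zero, pow_zero, one_mul, Pp_zero, one_mul, Nat.sub_zero]
    have hVtop : Vv m (m + 2) = X ^ (T (m + 2)) * Pp (m + 2) := by
      rw [Vv, ee_top, Nat.sub_self, Pp_zero, mul_one]
    have hne : (1 - X ^ (T (m + 2)) : PowerSeries ℚ) ≠ 0 :=
      one_sub_Xpow_ne_zero _ (T_pos (m + 1))
    -- case r = 0
    have r0 : Dd (m + 2) * Fs (m + 1) 0 = Pp (m + 2) := by
      have hsf := sumform m (m + 2) 0 (by omega) (by omega)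
      have hmul : Dd (m + 2) * Fs (m + 1) 0
          = (∑ j ∈ Icc 0 (m + 1), Dd (m + 2) * (X ^ j * Fs m j))
            + X ^ (T (m + 2)) * (Dd (m + 2) * Fs (m + 1) 0) := by
        conv_lhs => rw [hsf]
        rw [mul_add, Finset.mul_sum]
        ring
      rw [Finset.sum_congr rfl hsummand] at hmul
      have htel : (∑ j ∈ Icc 0 (m + 1), (Vv m j - Vv m (j + 1)))
          = Vv m 0 - Vv m (m + 2) := by
        have := tele_sum (Vv m) (m + 1) 0
        simpa using this
      rw [htel, hV0, hVtop] at hmul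
      have hkey : (1 - X ^ (T (m + 2))) * (Dd (m + 2) * Fs (m + 1) 0)
          = (1 - X ^ (T (m + 2))) * Pp (m + 2) := by
        linear_combination hmul
      exact mul_left_cancel₀ hne hkey
    intro r hr
    have hsf := sumform m (m + 2 - r) r hr rfl
    have hmul : Dd (m + 2) * Fs (m + 1) r
        = (∑ j ∈ Icc r (m + 1), Dd (m + 2) * (X ^ j * Fs m j))
          + X ^ (T (m + 2)) * (Dd (m + 2) * Fs (m + 1) 0) := by
      conv_lhs => rw [hsf]
      rw [mul_add, Finset.mul_sum]
      ring
    rw [Finset.sum_congr rfl (fun j hj => hsummand j (by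
      rw [mem_Icc] at hj ⊢; omega)), r0] at hmul
    rcases Nat.lt_or_ge r (m + 2) with hrlt | hrge
    · have htel : (∑ j ∈ Icc r (m + 1), (Vv m j - Vv m (j + 1)))
          = Vv m r - Vv m (m + 2) := by
        have := tele_sum (Vv m) (m + 1 - r) r
        rw [show r + (m + 1 - r) = m + 1 by omega] at this
        exact this
      rw [htel, hVtop] at hmul
      have : Dd (m + 2) * Fs (m + 1) r = Vv m r := by
        rw [hmul]; ring
      rw [this, Vv]
    · have hreq : r = m + 2 := by omega
      subst hreq
      rw [show Icc (m + 2) (m + 1) = ∅ from Icc_eq_empty (by omega), Finset.sum_empty,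
        zero_add] at hmul
      rw [hmul, ← hVtop, Vv]

lemma DG (k : ℕ) :
    Dd k * ∏ i ∈ range k, ((1 + X ^ (i + 1)) * (1 - X ^ (i + 2))⁻¹) = Pp k := by
  induction k with
  | zero => simp [Dd_zero, Pp_zero]
  | succ k ih =>
    rw [Dd_succ, Pp_succ, Finset.prod_range_succ]
    have hcc : PowerSeries.constantCoeff (R := ℚ) (1 - X ^ (k + 2)) ≠ 0 := by
      rw [cc_one_sub_Xpow _ (by omega)]
      norm_num
    have hcancel : (1 - X ^ (k + 2) : PowerSeries ℚ) * (1 - X ^ (k + 2))⁻¹ = 1 :=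
      PowerSeries.mul_inv_cancel _ hcc
    calc Dd k * (1 - X ^ (k + 2))
          * ((∏ i ∈ range k, ((1 + X ^ (i + 1)) * (1 - X ^ (i + 2))⁻¹))
            * ((1 + X ^ (k + 1)) * (1 - X ^ (k + 2))⁻¹))
        = (Dd k * ∏ i ∈ range k, ((1 + X ^ (i + 1)) * (1 - X ^ (i + 2))⁻¹))
            * (1 + X ^ (k + 1)) * ((1 - X ^ (k + 2)) * (1 - X ^ (k + 2))⁻¹) := by ring
      _ = Pp k * (1 + X ^ (k + 1)) := by rw [ih, hcancel, mul_one]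

lemma Dd_ne_zero (k : ℕ) : Dd k ≠ 0 := by
  intro h
  have hc : PowerSeries.constantCoeff (R := ℚ) (Dd k) = 1 := by
    rw [Dd, map_prod]
    rw [Finset.prod_congr rfl (fun i _ => cc_one_sub_Xpow (i + 2) (by omega))]
    simp
  rw [h, map_zero] at hc
  norm_num at hc

lemma final_series (m : ℕ) :
    Fs m 0 = ∏ i ∈ range (m + 1), ((1 + X ^ (i + 1)) * (1 - X ^ (i + 2))⁻¹) := by
  apply mul_left_cancel₀ (Dd_ne_zero (m + 1))
  rw [DG (m + 1)]
  have := main m 0 (Nat.zero_le _)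
  rw [ee_zero, pow_zero, one_mul, Pp_zero, one_mul, Nat.sub_zero] at this
  exact this

end ALH

/-- **The Anti-Lecture Hall Theorem** (Corteel–Savage).
For `n ≥ 1` and every `N : ℕ`, the number of anti-lecture hall compositions
`λ ∈ A_n` (sequences `λ₁,…,λₙ` of nonnegative integers with
`λ₁/1 ≥ λ₂/2 ≥ … ≥ λₙ/n ≥ 0`, i.e. `(i+1)·λᵢ ≥ i·λ_{i+1}`) of weight `N`
equals the coefficient of `q^N` in `∏_{i=1}^{n} (1 + q^i)/(1 - q^{i+1})`. -/
theorem anti_lecture_hall_theorem (n : ℕ) (hn : 0 < n) (N : ℕ) :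
    (Nat.card {l : Fin n → ℕ //
        (∀ i : Fin n, ∀ h : i.1 + 1 < n,
          ((i.1 : ℤ) + 1) * (l ⟨i.1 + 1, h⟩ : ℤ) ≤ ((i.1 : ℤ) + 2) * (l i : ℤ)) ∧
        ∑ i, l i = N} : ℚ) =
      PowerSeries.coeff (R := ℚ) N
        (∏ i ∈ Finset.range n,
          ((1 + (PowerSeries.X : PowerSeries ℚ) ^ (i + 1)) *
            (1 - (PowerSeries.X : PowerSeries ℚ) ^ (i + 2))⁻¹)) := by
  obtain ⟨m, rfl⟩ : ∃ m, n = m + 1 := ⟨n - 1, by omega⟩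
  have hbij : ∀ l : Fin (m + 1) → ℕ,
      ((∀ i : Fin (m + 1), ∀ h : i.1 + 1 < m + 1,
          ((i.1 : ℤ) + 1) * (l ⟨i.1 + 1, h⟩ : ℤ) ≤ ((i.1 : ℤ) + 2) * (l i : ℤ)) ∧
        ∑ i, l i = N) ↔ l ∈ ALH.S m N 0 := by
    intro l
    rw [ALH.mem_S]
    constructor
    · rintro ⟨hc, hs⟩
      refine ⟨?_, hs, Nat.zero_le _⟩
      intro i h
      have := hc ⟨i, by omega⟩ h
      exact_mod_cast this
    · rintro ⟨hc, hs, -⟩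
      refine ⟨?_, hs⟩
      intro i h
      have h2 := hc i.1 h
      have he : (⟨i.1, by omega⟩ : Fin (m + 1)) = i := Fin.ext rfl
      rw [he] at h2
      exact_mod_cast h2
  have hcard : Nat.card {l : Fin (m + 1) → ℕ //
      (∀ i : Fin (m + 1), ∀ h : i.1 + 1 < m + 1,
          ((i.1 : ℤ) + 1) * (l ⟨i.1 + 1, h⟩ : ℤ) ≤ ((i.1 : ℤ) + 2) * (l i : ℤ)) ∧
        ∑ i, l i = N} = ALH.a m N 0 := by
    rw [Nat.card_congr (Equiv.subtypeEquivRight hbij), ALH.a,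
      Nat.card_eq_fintype_card, Fintype.card_coe]
  rw [hcard, ← ALH.final_series m, ALH.coeff_Fs]
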